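/- Strong Fine–Wilf: suppose w1 = w1' · w · w1'' has period p1, w2 = w2' · w · w2'' has period p2, and the common factor w has length at least p1 + p2 - gcd(p1,p2). Then the word w3 = w1' · w · w2'' (prefix from w1, suffix from w2, glued on the common factor w) has period gcd(p1,p2). -/

import Mathlib

/-- A word `w` has period `p` if letters at distance `p` coincide. -/
def HasPeriod {α : Type*} (w : List α) (p : ℕ) : Prop :=
  ∀ i, i + p < w.length → w[i]? = w[(i + p)]?

section Aux

variable {α : Type*}

/-- A prefix of a periodic word is periodic. -/
lemma hasPeriod_prefix {l t : List α} {p : ℕ} (h : HasPeriod (l ++ t) p) :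
    HasPeriod l p := by
  intro i hi
  have h1 : i < l.length := by omega
  have h2 : i + p < (l ++ t).length := by simp; omega
  have := h i h2
  rwa [List.getElem?_append_left h1, List.getElem?_append_left hi] at this

/-- A suffix of a periodic word is periodic. -/
lemma hasPeriod_suffix {t l : List α} {p : ℕ} (h : HasPeriod (t ++ l) p) :
    HasPeriod l p := by
  intro i hi
  have h2 : (t.length + i) + p < (t ++ l).length := by simp; omega
  have := h (t.length + i) h2
  rwa [List.getElem?_append_right (by omega), List.getElem?_append_right (by omega),
    Nat.add_sub_cancel_left, show t.length + i + p - t.length = i + p by omega] at this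

lemma hasPeriod_reverse {w : List α} {p : ℕ} (h : HasPeriod w p) :
    HasPeriod w.reverse p := by
  intro i hi
  rw [List.length_reverse] at hi
  rw [List.getElem?_reverse (by omega), List.getElem?_reverse (by omega)]
  have := h (w.length - 1 - (i + p)) (by omega)
  rw [show w.length - 1 - (i + p) + p = w.length - 1 - i by omega] at this
  exact this.symm

/-- Extension of a period `q` valid on a suffix to the whole word,
given the word has period `p` with `q ∣ p`. -/
lemma hasPeriod_ext_suffix {u : List α} {p q k : ℕ} (hq : 1 ≤ q) (hp1 : 1 ≤ p)
    (hdvd : q ∣ p) (hp : HasPeriod u p) (hk : k + p ≤ u.length)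
    (hsuf : ∀ j, k ≤ j → j + q < u.length → u[j]? = u[(j + q)]?) :
    HasPeriod u q := by
  obtain ⟨m, hm⟩ := hdvd
  have hm1 : 1 ≤ m := by
    rcases Nat.eq_zero_or_pos m with h | h
    · subst h; simp at hm; omega
    · exact h
  have key : ∀ d i, u.length ≤ i + d → i + q < u.length →
      u[i]? = u[(i + q)]? := by
    intro d
    induction d with
    | zero => intro i h1 h2; omega
    | succ d ih =>
      intro i h1 h2
      by_cases hik : k ≤ i
      · exact hsuf i hik h2
      · have hip : i + p < u.length := by omega
        have h0 : u[i]? = u[(i + p)]? := hp i hip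
        have chain : ∀ j, i + q + j * q ≤ i + p →
            u[(i + q)]? = u[(i + q + j * q)]? := by
          intro j
          induction j with
          | zero => simp
          | succ j ihj =>
            intro hj
            have e : (j + 1) * q = j * q + q := by ring
            have hj' : i + q + j * q ≤ i + p := by omega
            rw [ihj hj']
            have := ih (i + q + j * q) (by omega) (by omega)
            rw [this]
            congr 1
            omega
        have e2 : i + q + (m - 1) * q = i + p := by
          have h3 : (m - 1) * q + q = m * q := by
            cases m with
            | zero => omega
            | succ m => simp [Nat.succ_mul]
          have h4 : m * q = p := by rw [hm, Nat.mul_comm]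
          omega
        have hc := chain (m - 1) (by omega)
        rw [e2] at hc
        exact h0.trans hc.symm
  intro i hi
  exact key u.length i (by omega) hi

/-- Extension of a period `q` valid on a prefix of length `k` to the whole word. -/
lemma hasPeriod_ext_prefix {u : List α} {p q k : ℕ} (hq : 1 ≤ q) (hp1 : 1 ≤ p)
    (hdvd : q ∣ p) (hp : HasPeriod u p) (hkp : p ≤ k) (hku : k ≤ u.length)
    (hpre : ∀ j, j + q < k → u[j]? = u[(j + q)]?) :
    HasPeriod u q := by
  have hrev : HasPeriod u.reverse q := by
    apply hasPeriod_ext_suffix (p := p) (k := u.length - k) hq hp1 hdvd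
      (hasPeriod_reverse hp)
    · rw [List.length_reverse]; omega
    · intro j hj hjq
      rw [List.length_reverse] at hjq
      rw [List.getElem?_reverse (by omega), List.getElem?_reverse (by omega)]
      have := hpre (u.length - 1 - (j + q)) (by omega)
      rw [show u.length - 1 - (j + q) + q = u.length - 1 - j by omega] at this
      exact this.symm
  have := hasPeriod_reverse hrev
  rwa [List.reverse_reverse] at this

/-- One step of the Fine--Wilf induction, assuming `q < p`. -/
lemma fw_step {N p q : ℕ} {w : List α}
    (ih : ∀ p q : ℕ, ∀ w : List α, p + q ≤ N → 1 ≤ p → 1 ≤ q →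
      HasPeriod w p → HasPeriod w q → p + q - Nat.gcd p q ≤ w.length →
      HasPeriod w (Nat.gcd p q))
    (hN : p + q ≤ N + 1) (hp1 : 1 ≤ p) (hq1 : 1 ≤ q) (hgt : q < p)
    (hp : HasPeriod w p) (hq : HasPeriod w q)
    (hlen : p + q - Nat.gcd p q ≤ w.length) :
    HasPeriod w (Nat.gcd p q) := by
  set g := Nat.gcd p q with hg
  have hgdvdp : g ∣ p := Nat.gcd_dvd_left p q
  have hgdvdq : g ∣ q := Nat.gcd_dvd_right p q
  have hg1 : 1 ≤ g := Nat.gcd_pos_of_pos_left _ hp1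
  have hgq : g ≤ q := Nat.le_of_dvd hq1 hgdvdq
  have hgp : g ≤ p := Nat.le_of_dvd hp1 hgdvdp
  have hgcd' : Nat.gcd (p - q) q = g := by
    rw [hg, Nat.gcd_comm (p - q) q, Nat.gcd_comm p q]
    exact Nat.gcd_sub_self_right (le_of_lt hgt)
  have hgdvdpq : g ∣ p - q := by rw [← hgcd']; exact Nat.gcd_dvd_left _ _
  have hgpq : g ≤ p - q := Nat.le_of_dvd (by omega) hgdvdpq
  clear_value g
  set n := w.length with hn
  have hqn : q ≤ n := by omega
  set u := w.take (n - q) with hu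
  have hulen : u.length = n - q := by
    rw [hu, List.length_take]; omega
  have huq : HasPeriod u q := by
    intro i hi
    rw [hulen] at hi
    rw [hu, List.getElem?_take_of_lt (by omega), List.getElem?_take_of_lt (by omega)]
    exact hq i (by omega)
  have hupq : HasPeriod u (p - q) := by
    intro i hi
    rw [hulen] at hi
    rw [hu, List.getElem?_take_of_lt (by omega), List.getElem?_take_of_lt (by omega)]
    have e1 := hq (i + (p - q)) (by omega)
    have e2 := hp i (by omega)
    rw [show i + (p - q) + q = i + p by omega] at e1
    exact e2.trans e1.symm
  have hug : HasPeriod u g := by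
    have := ih (p - q) q u (by omega) (by omega) hq1 hupq huq
      (by rw [hgcd', hulen]; omega)
    rwa [hgcd'] at this
  -- extend from the prefix u to all of w
  apply hasPeriod_ext_prefix (p := q) (k := n - q) hg1 hq1 hgdvdq hq
    (by omega) (by omega)
  intro j hj
  have := hug j (by rw [hulen]; omega)
  rwa [hu, List.getElem?_take_of_lt (by omega), List.getElem?_take_of_lt (by omega)] at this

/-- Classical (Fine–Wilf) theorem. -/
lemma fine_wilf : ∀ N p q : ℕ, ∀ w : List α, p + q ≤ N → 1 ≤ p → 1 ≤ q →
    HasPeriod w p → HasPeriod w q → p + q - Nat.gcd p q ≤ w.length →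
    HasPeriod w (Nat.gcd p q) := by
  intro N
  induction N with
  | zero => intro p q w h hp1 hq1; omega
  | succ N ih =>
    intro p q w hN hp1 hq1 hp hq hlen
    rcases lt_trichotomy p q with hlt | heq | hgt
    · rw [Nat.gcd_comm]
      refine fw_step ih (by omega) hq1 hp1 hlt hq hp ?_
      have hcomm : Nat.gcd q p = Nat.gcd p q := Nat.gcd_comm q p
      omega
    · subst heq
      rw [Nat.gcd_self]
      exact hp
    · exact fw_step ih hN hp1 hq1 hgt hp hq hlen

end Aux

/-- Strong Fine–Wilf theorem: if `w1 = w1' · w · w1''` has period `p1`,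
`w2 = w2' · w · w2''` has period `p2`, and the common factor `w` has length at
least `p1 + p2 - gcd(p1,p2)`, then the glued word `w3 = w1' · w · w2''`
has period `gcd(p1,p2)`. -/
theorem strong_fine_wilf {α : Type*} (w1' w w1'' w2' w2'' : List α) (p1 p2 : ℕ)
    (hp1 : 1 ≤ p1) (hp2 : 1 ≤ p2)
    (h1 : HasPeriod (w1' ++ w ++ w1'') p1)
    (h2 : HasPeriod (w2' ++ w ++ w2'') p2)
    (hlen : p1 + p2 - Nat.gcd p1 p2 ≤ w.length) :
    HasPeriod (w1' ++ w ++ w2'') (Nat.gcd p1 p2) := by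
  set g := Nat.gcd p1 p2 with hg
  have hg1 : 1 ≤ g := Nat.gcd_pos_of_pos_left _ hp1
  have hgp1 : g ∣ p1 := Nat.gcd_dvd_left p1 p2
  have hgp2 : g ∣ p2 := Nat.gcd_dvd_right p1 p2
  have hgle1 : g ≤ p1 := Nat.le_of_dvd hp1 hgp1
  have hgle2 : g ≤ p2 := Nat.le_of_dvd hp2 hgp2
  have hwg0 : HasPeriod w g := by
    rw [hg]
    refine fine_wilf (p1 + p2) p1 p2 w (le_refl _) hp1 hp2 ?_ ?_ ?_
    · rw [List.append_assoc] at h1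
      exact hasPeriod_prefix (hasPeriod_suffix h1)
    · rw [List.append_assoc] at h2
      exact hasPeriod_prefix (hasPeriod_suffix h2)
    · rw [← hg]; exact hlen
  clear_value g
  set a := w1'.length with ha
  clear_value a
  set n := w.length with hn
  clear_value n
  have hnp1 : p1 ≤ n := by omega
  have hnp2 : p2 ≤ n := by omega
  have hwg : HasPeriod w g := hwg0
  -- A = w1' ++ w has period g
  have hA_p1 : HasPeriod (w1' ++ w) p1 := hasPeriod_prefix h1
  have hA : HasPeriod (w1' ++ w) g := by
    apply hasPeriod_ext_suffix (p := p1) (k := a) hg1 hp1 hgp1 hA_p1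
      (by simp only [List.length_append, ← ha, ← hn]; omega)
    intro j hj hjq
    simp only [List.length_append, ← ha, ← hn] at hjq
    rw [List.getElem?_append_right (by omega), List.getElem?_append_right (by omega), ← ha,
      show j + g - a = j - a + g by omega]
    exact hwg (j - a) (by omega)
  -- B = w ++ w2'' has period g
  have hB_p2 : HasPeriod (w ++ w2'') p2 := by
    rw [List.append_assoc] at h2
    exact hasPeriod_suffix h2
  have hB : HasPeriod (w ++ w2'') g := by
    apply hasPeriod_ext_prefix (p := p2) (k := n) hg1 hp2 hgp2 hB_p2 hnp2
      (by simp only [List.length_append, ← hn]; omega)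
    intro j hj
    rw [List.getElem?_append_left (by omega), List.getElem?_append_left (by omega)]
    exact hwg j (by omega)
  -- combine
  intro i hi
  simp only [List.length_append, ← ha, ← hn] at hi
  by_cases hcase : i + g < a + n
  · have e1 : (w1' ++ w ++ w2'')[i]? = (w1' ++ w)[i]? :=
      List.getElem?_append_left (l₁ := w1' ++ w) (l₂ := w2'')
        (by simp only [List.length_append, ← ha, ← hn]; omega)
    have e2 : (w1' ++ w ++ w2'')[(i + g)]? = (w1' ++ w)[(i + g)]? :=
      List.getElem?_append_left (l₁ := w1' ++ w) (l₂ := w2'')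
        (by simp only [List.length_append, ← ha, ← hn]; omega)
    rw [e1, e2]
    exact hA i (by simp only [List.length_append, ← ha, ← hn]; omega)
  · have hia : a ≤ i := by omega
    have e1 : (w1' ++ (w ++ w2''))[i]? = (w ++ w2'')[(i - w1'.length)]? :=
      List.getElem?_append_right (l₁ := w1') (by omega)
    have e2 : (w1' ++ (w ++ w2''))[i + g]? = (w ++ w2'')[(i + g - w1'.length)]? :=
      List.getElem?_append_right (l₁ := w1') (by omega)
    rw [List.append_assoc, e1, e2, ← ha,
      show i + g - a = i - a + g by omega]
    exact hB (i - a) (by simp only [List.length_append, ← hn]; omega)
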